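/- Let l̄_1 > ⋯ > l̄_p > 0 and L̄ = diag(l̄_1,…,l̄_p). Then for every Γ ∈ O(p): tr(L̄ Γᵗ L̄⁻¹ Γ) = ∑_{i,j} (l̄_j/l̄_i)·Γ_{ij}² ≥ p, with equality if and only if Γ is a diagonal matrix (necessarily with diagonal entries ±1). -/

import Mathlib

open Matrix

/-- For `L̄ = diag(l̄)` with `l̄₁ > ⋯ > l̄_p > 0` and `Γ ∈ O(p)`:
`tr(L̄ Γᵗ L̄⁻¹ Γ) = ∑_{i,j} (l̄_j/l̄_i) Γ_{ij}² ≥ p`, with equality iff `Γ` is diagonal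
(in which case its diagonal entries are `±1`). -/
theorem trace_inequality_orthogonal_group
    (p : ℕ) (hp : 1 ≤ p)
    (lbar : Fin p → ℝ) (hl : StrictAnti lbar) (hlpos : ∀ i, 0 < lbar i)
    (Lbar : Matrix (Fin p) (Fin p) ℝ) (hLbar : Lbar = Matrix.diagonal lbar)
    (Γ : Matrix (Fin p) (Fin p) ℝ) (hΓ : Γ ∈ Matrix.orthogonalGroup (Fin p) ℝ) :
    (Matrix.trace (Lbar * Γᵀ * Lbar⁻¹ * Γ) =
        ∑ i : Fin p, ∑ j : Fin p, lbar j / lbar i * (Γ i j) ^ 2)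
    ∧ (p : ℝ) ≤ Matrix.trace (Lbar * Γᵀ * Lbar⁻¹ * Γ)
    ∧ (Matrix.trace (Lbar * Γᵀ * Lbar⁻¹ * Γ) = p ↔
        ∀ i j : Fin p, i ≠ j → Γ i j = 0)
    ∧ ((∀ i j : Fin p, i ≠ j → Γ i j = 0) → ∀ i, Γ i i = 1 ∨ Γ i i = -1) := by
  have hne : ∀ i, lbar i ≠ 0 := fun i => (hlpos i).ne'
  have hinv : Lbar⁻¹ = Matrix.diagonal (fun i => (lbar i)⁻¹) := by
    rw [hLbar]
    apply Matrix.inv_eq_right_inv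
    rw [Matrix.diagonal_mul_diagonal]
    have : (fun i => lbar i * (lbar i)⁻¹) = fun _ => (1:ℝ) := by
      funext i; exact mul_inv_cancel₀ (hne i)
    rw [this, Matrix.diagonal_one]
  obtain ⟨h1, h2⟩ := hΓ
  have hrow : ∀ i, ∑ j, Γ i j ^ 2 = 1 := by
    intro i
    have := congrFun (congrFun h2 i) i
    simpa [Matrix.mul_apply, Matrix.one_apply, sq] using this
  have hcol : ∀ j, ∑ i, Γ i j ^ 2 = 1 := by
    intro j
    have := congrFun (congrFun h1 j) j
    simpa [Matrix.mul_apply, Matrix.one_apply, sq] using this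
  have htr : Matrix.trace (Lbar * Γᵀ * Lbar⁻¹ * Γ) =
      ∑ i : Fin p, ∑ j : Fin p, lbar j / lbar i * (Γ i j) ^ 2 := by
    rw [hinv, hLbar, Matrix.trace]
    rw [Finset.sum_comm]
    apply Finset.sum_congr rfl
    intro j _
    rw [Matrix.diag]
    simp only [Matrix.mul_apply, Matrix.diagonal_apply, Matrix.transpose_apply]
    simp only [ite_mul, mul_ite, zero_mul, mul_zero, Finset.sum_ite_eq, Finset.sum_ite_eq',
      Finset.mem_univ, if_true]
    apply Finset.sum_congr rfl
    intro i _
    field_simp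
  -- key pointwise bound
  have hkey : ∀ i j : Fin p,
      (1 + (Real.log (lbar j) - Real.log (lbar i))) * Γ i j ^ 2 ≤
        lbar j / lbar i * Γ i j ^ 2 := by
    intro i j
    apply mul_le_mul_of_nonneg_right _ (sq_nonneg _)
    have hx : 0 < lbar j / lbar i := div_pos (hlpos j) (hlpos i)
    have hlog := Real.log_le_sub_one_of_pos hx
    rw [Real.log_div (hne j) (hne i)] at hlog
    linarith
  have hnn : ∀ i j : Fin p, 0 ≤ lbar j / lbar i * Γ i j ^ 2 -
      (1 + (Real.log (lbar j) - Real.log (lbar i))) * Γ i j ^ 2 :=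
    fun i j => sub_nonneg.mpr (hkey i j)
  -- sum of lower bounds equals p
  have hlower : ∑ i : Fin p, ∑ j : Fin p,
      (1 + (Real.log (lbar j) - Real.log (lbar i))) * Γ i j ^ 2 = (p:ℝ) := by
    have e1 : ∀ i : Fin p, ∑ j, (1 + (Real.log (lbar j) - Real.log (lbar i))) * Γ i j ^ 2
        = 1 + ((∑ j, Real.log (lbar j) * Γ i j ^ 2) - Real.log (lbar i)) := by
      intro i
      have e : ∀ j : Fin p, (1 + (Real.log (lbar j) - Real.log (lbar i))) * Γ i j ^ 2
          = Γ i j ^ 2 + (Real.log (lbar j) * Γ i j ^ 2 - Real.log (lbar i) * Γ i j ^ 2) := by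
        intro j; ring
      rw [Finset.sum_congr rfl (fun j _ => e j), Finset.sum_add_distrib,
        Finset.sum_sub_distrib, ← Finset.mul_sum, hrow i, mul_one]
    rw [Finset.sum_congr rfl (fun i _ => e1 i), Finset.sum_add_distrib,
      Finset.sum_sub_distrib]
    have e2 : ∑ i : Fin p, ∑ j, Real.log (lbar j) * Γ i j ^ 2
        = ∑ i : Fin p, Real.log (lbar i) := by
      rw [Finset.sum_comm]
      exact Finset.sum_congr rfl fun j _ => by rw [← Finset.mul_sum, hcol j, mul_one]
    rw [e2]
    simp
  have hineq : (p:ℝ) ≤ ∑ i : Fin p, ∑ j : Fin p, lbar j / lbar i * (Γ i j) ^ 2 := by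
    rw [← hlower]
    exact Finset.sum_le_sum fun i _ => Finset.sum_le_sum fun j _ => hkey i j
  have heqiff : (∑ i : Fin p, ∑ j : Fin p, lbar j / lbar i * (Γ i j) ^ 2) = p ↔
      ∀ i j : Fin p, i ≠ j → Γ i j = 0 := by
    constructor
    · intro hSp i j hij
      have hsum0 : ∑ i : Fin p, ∑ j : Fin p, (lbar j / lbar i * Γ i j ^ 2 -
          (1 + (Real.log (lbar j) - Real.log (lbar i))) * Γ i j ^ 2) = 0 := by
        rw [Finset.sum_congr rfl (fun i _ => Finset.sum_sub_distrib _ _),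
          Finset.sum_sub_distrib, hlower, hSp, sub_self]
      have hinner := (Finset.sum_eq_zero_iff_of_nonneg
        (fun i _ => Finset.sum_nonneg fun j _ => hnn i j)).mp hsum0 i (Finset.mem_univ i)
      have hterm := (Finset.sum_eq_zero_iff_of_nonneg
        (fun j _ => hnn i j)).mp hinner j (Finset.mem_univ j)
      by_contra hΓij
      have hsq : Γ i j ^ 2 ≠ 0 := pow_ne_zero _ hΓij
      have hfac0 : (lbar j / lbar i - (1 + (Real.log (lbar j) - Real.log (lbar i)))) *
          Γ i j ^ 2 = 0 := by rw [sub_mul]; linarith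
      have hfac : lbar j / lbar i - (1 + (Real.log (lbar j) - Real.log (lbar i))) = 0 :=
        (mul_eq_zero.mp hfac0).resolve_right hsq
      have hx : 0 < lbar j / lbar i := div_pos (hlpos j) (hlpos i)
      have hx1 : lbar j / lbar i ≠ 1 := by
        intro h
        have : lbar j = lbar i := (div_eq_one_iff_eq (hne i)).mp h
        exact hij (hl.injective this).symm
      have hlog := Real.log_lt_sub_one_of_pos hx hx1
      rw [Real.log_div (hne j) (hne i)] at hlog
      linarith
    · intro hdiag
      have hdiagsq : ∀ i : Fin p, Γ i i ^ 2 = 1 := by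
        intro i
        have h := hrow i
        rw [Finset.sum_eq_single i (fun j _ hji => by
          rw [hdiag i j (Ne.symm hji)]; ring) (by simp)] at h
        exact h
      have e : ∀ i : Fin p, ∑ j, lbar j / lbar i * Γ i j ^ 2 = 1 := by
        intro i
        rw [Finset.sum_eq_single i (fun j _ hji => by
          rw [hdiag i j (Ne.symm hji)]; ring) (by simp)]
        rw [div_self (hne i), one_mul, hdiagsq i]
      rw [Finset.sum_congr rfl (fun i _ => e i)]
      simp
  refine ⟨htr, ?_, ?_, ?_⟩
  · rw [htr]; exact hineq
  · rw [htr]; exact heqiff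
  · intro hdiag i
    have h21 : Γ i i ^ 2 = 1 := by
      have h := hrow i
      rw [Finset.sum_eq_single i (fun j _ hji => by
        rw [hdiag i j (Ne.symm hji)]; ring) (by simp)] at h
      exact h
    have hz : (Γ i i - 1) * (Γ i i + 1) = 0 := by nlinarith
    rcases mul_eq_zero.mp hz with h | h
    · left; linarith
    · right; linarith
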